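/- The following are equivalent: (a) every zero of ζ in the critical strip S has real part 1/2 and is simple (the Riemann hypothesis together with the simplicity hypothesis); (c) ν_ζ has no attracting fixed point, i.e. every zero α ∈ ℂ of ζ, of order m, satisfies |1 − 1/(mα)| ≥ 1. -/

import Mathlib

open Complex

/-- The nu function of the Riemann zeta function: `ν_ζ(z) = z - ζ(z)/(z ζ'(z))`. -/
noncomputable def nuZeta (z : ℂ) : ℂ := z - riemannZeta z / (z * deriv riemannZeta z)

/-- Key computation: `|1 - 1/(mα)| ≥ 1` iff `2 m Re α ≤ 1`. -/
lemma key_abs (α : ℂ) (hα : α ≠ 0) (m : ℕ) (hm : 1 ≤ m) :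
    1 ≤ ‖(1 - 1 / ((m : ℂ) * α))‖ ↔ 2 * m * α.re ≤ 1 := by
  have hm0 : ((m : ℂ)) ≠ 0 := Nat.cast_ne_zero.mpr (by omega)
  have hn : 0 < Complex.normSq α := Complex.normSq_pos.mpr hα
  set w : ℂ := ((m : ℂ) * α)⁻¹ with hw
  have hD : (0 : ℝ) < (m : ℝ) ^ 2 * Complex.normSq α := by
    have : (0:ℝ) < (m:ℝ) := by exact_mod_cast Nat.pos_of_ne_zero (by omega)
    positivity
  have hwre : w.re = (m : ℝ) * α.re / ((m : ℝ) ^ 2 * Complex.normSq α) := by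
    rw [hw, Complex.inv_re, Complex.normSq_mul, Complex.normSq_natCast]
    congr 1
    · simp [Complex.mul_re]
    · ring
  have hwns : Complex.normSq w = 1 / ((m : ℝ) ^ 2 * Complex.normSq α) := by
    rw [hw, Complex.normSq_inv, Complex.normSq_mul, Complex.normSq_natCast]
    rw [one_div]
    congr 1
    ring
  have e1 : w.re * ((m : ℝ) ^ 2 * Complex.normSq α) = (m : ℝ) * α.re := by
    rw [hwre]; field_simp
  have e2 : Complex.normSq w * ((m : ℝ) ^ 2 * Complex.normSq α) = 1 := by
    rw [hwns]; field_simp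
  have hsq : ‖(1 - 1 / ((m : ℂ) * α))‖ ^ 2 = 1 - 2 * w.re + Complex.normSq w := by
    rw [one_div, ← hw, Complex.sq_norm, Complex.normSq_sub]
    simp only [Complex.normSq_one, one_mul]
    rw [show ((starRingEnd ℂ) w).re = w.re from Complex.conj_re w]
    ring
  have habs0 : (0:ℝ) ≤ ‖(1 - 1 / ((m : ℂ) * α))‖ := norm_nonneg _
  constructor
  · intro hle
    have h2 : (1:ℝ) ≤ 1 - 2 * w.re + Complex.normSq w := by rw [← hsq]; nlinarith
    nlinarith
  · intro hle
    have h2 : (1:ℝ) ≤ ‖(1 - 1 / ((m : ℂ) * α))‖ ^ 2 := by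
      rw [hsq]; nlinarith
    nlinarith


noncomputable def PhiZ (s : ℂ) : ℂ :=
  2 * (2 * Real.pi : ℂ) ^ (-s) * Complex.Gamma s * Complex.cos (Real.pi * s / 2)

lemma phiZ_diff {s : ℂ} (hs : ∀ n : ℕ, s ≠ -n) : DifferentiableAt ℂ PhiZ s := by
  have h1 : DifferentiableAt ℂ (fun z : ℂ => (2 * Real.pi : ℂ) ^ (-z)) s := by
    apply DifferentiableAt.const_cpow (differentiableAt_id.neg)
    left
    simp only [ne_eq, mul_eq_zero, not_or]
    exact ⟨two_ne_zero, by exact_mod_cast Real.pi_ne_zero⟩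
  have h2 : DifferentiableAt ℂ Complex.Gamma s := Complex.differentiableAt_Gamma s hs
  have h3 : DifferentiableAt ℂ (fun z : ℂ => Complex.cos (Real.pi * z / 2)) s := by
    apply Complex.differentiable_cos.differentiableAt.comp
    fun_prop
  exact (((differentiableAt_const 2).mul h1).mul h2).mul h3

lemma phiZ_ne {s : ℂ} (h1 : 0 < s.re) (h2 : s.re < 1) : PhiZ s ≠ 0 := by
  have hs : ∀ n : ℕ, s ≠ -n := by
    intro n hn
    rw [hn] at h1
    simp only [Complex.neg_re, Complex.natCast_re] at h1
    linarith [Nat.cast_nonneg (α := ℝ) n]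
  apply mul_ne_zero
  apply mul_ne_zero
  apply mul_ne_zero two_ne_zero
  · intro h
    rw [Complex.cpow_eq_zero_iff] at h
    have := h.1
    simp only [mul_eq_zero] at this
    rcases this with h | h
    · norm_num at h
    · exact Real.pi_ne_zero (by exact_mod_cast h)
  · exact Complex.Gamma_ne_zero hs
  · rw [Complex.cos_ne_zero_iff]
    intro k hk
    have hπ : (Real.pi : ℂ) ≠ 0 := by exact_mod_cast Real.pi_ne_zero
    have h' : (Real.pi : ℂ) * s = (Real.pi : ℂ) * (2 * (k : ℂ) + 1) := by
      linear_combination 2 * hk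
    have hs' : s = 2 * (k : ℂ) + 1 := mul_left_cancel₀ hπ h'
    have : s.re = 2 * (k : ℝ) + 1 := by rw [hs']; push_cast; simp
    rw [this] at h1 h2
    have hk0 : (0:ℝ) < (k:ℝ) + 1 := by linarith
    have hk1 : (k:ℝ) < 0 := by linarith
    have : (0:ℤ) < k + 1 := by exact_mod_cast hk0
    have : (k:ℤ) < 0 := by exact_mod_cast hk1
    omega

lemma notneg {s : ℂ} (h1 : 0 < s.re) : ∀ n : ℕ, s ≠ -n := by
  intro n hn
  rw [hn] at h1
  simp only [Complex.neg_re, Complex.natCast_re] at h1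
  linarith [Nat.cast_nonneg (α := ℝ) n]

/-- From condition (c) and a factorization of ζ at a point `α` of the critical strip,
deduce `m = 1` and `Re α = 1/2`. -/
lemma factor_bound
    (hc : ∀ (α : ℂ) (m : ℕ), 1 ≤ m →
      ∀ (h : ℂ → ℂ) (U : Set ℂ), IsOpen U → α ∈ U → DifferentiableOn ℂ h U → h α ≠ 0 →
      (∀ z ∈ U, riemannZeta z = (z - α) ^ m * h z) →
      1 ≤ ‖(1 - 1 / (m * α) : ℂ)‖)
    (α : ℂ) (h1 : 0 < α.re) (h2 : α.re < 1)
    (m : ℕ) (hm : 1 ≤ m) (h : ℂ → ℂ) (U : Set ℂ) (hU : IsOpen U) (hαU : α ∈ U)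
    (hdiff : DifferentiableOn ℂ h U) (hh : h α ≠ 0)
    (hfac : ∀ z ∈ U, riemannZeta z = (z - α) ^ m * h z) :
    m = 1 ∧ α.re = 1 / 2 := by
  have hα0 : α ≠ 0 := fun h0 => by rw [h0] at h1; simp at h1
  have b1 : 2 * (m : ℝ) * α.re ≤ 1 :=
    (key_abs α hα0 m hm).mp (hc α m hm h U hU hαU hdiff hh hfac)
  -- set up the factorization at β = 1 - α
  set β : ℂ := 1 - α with hβ
  have hβre : β.re = 1 - α.re := by simp [hβ]
  have hβ0 : β ≠ 0 := by
    intro h0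
    rw [h0] at hβre
    simp at hβre
    linarith
  set U' : Set ℂ := (fun w : ℂ => 1 - w) ⁻¹' ({z | 0 < z.re} ∩ {z | z.re < 1} ∩ U) with hU'
  set g : ℂ → ℂ := fun w => (-1 : ℂ) ^ m * PhiZ (1 - w) * h (1 - w) with hg
  have hcont : Continuous (fun w : ℂ => 1 - w) := by fun_prop
  have hU'open : IsOpen U' := by
    apply IsOpen.preimage hcont
    exact (((isOpen_lt continuous_const Complex.continuous_re).inter
      (isOpen_lt Complex.continuous_re continuous_const)).inter hU)
  have hβU' : β ∈ U' := by
    simp only [hU', Set.mem_preimage, Set.mem_inter_iff, Set.mem_setOf_eq]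
    rw [show (1 : ℂ) - β = α by rw [hβ]; ring]
    exact ⟨⟨h1, h2⟩, hαU⟩
  have hmem : ∀ w ∈ U', 0 < (1 - w).re ∧ (1 - w).re < 1 ∧ (1 - w) ∈ U := by
    intro w hw
    simp only [hU', Set.mem_preimage, Set.mem_inter_iff, Set.mem_setOf_eq] at hw
    exact ⟨hw.1.1, hw.1.2, hw.2⟩
  have hgdiff : DifferentiableOn ℂ g U' := by
    intro w hw
    obtain ⟨hw1, hw2, hw3⟩ := hmem w hw
    have hPhi : DifferentiableWithinAt ℂ (fun w => PhiZ (1 - w)) U' w := by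
      exact ((phiZ_diff (notneg hw1)).comp w (by fun_prop)).differentiableWithinAt
    have hha : DifferentiableWithinAt ℂ (fun w => h (1 - w)) U' w := by
      apply DifferentiableWithinAt.comp w (hdiff (1 - w) hw3)
        (((differentiable_id (𝕜 := ℂ)).const_sub 1) w).differentiableWithinAt
      intro x hx
      exact (hmem x hx).2.2
    exact ((differentiableWithinAt_const _).mul hPhi).mul hha
  have hgβ : g β ≠ 0 := by
    rw [hg]
    simp only
    rw [show (1 : ℂ) - β = α by rw [hβ]; ring]
    exact mul_ne_zero (mul_ne_zero (pow_ne_zero _ (neg_ne_zero.mpr one_ne_zero)) (phiZ_ne h1 h2)) hh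
  have hfac' : ∀ w ∈ U', riemannZeta w = (w - β) ^ m * g w := by
    intro w hw
    obtain ⟨hw1, hw2, hw3⟩ := hmem w hw
    have hne1 : (1 - w : ℂ) ≠ 1 := by
      intro hc'
      have : (1 - w).re = 1 := by rw [hc']; simp
      linarith
    have hfe := riemannZeta_one_sub (notneg hw1) hne1
    rw [show (1 : ℂ) - (1 - w) = w by ring] at hfe
    rw [hfe, hfac (1 - w) hw3]
    have hpow : (1 - w - α) ^ m = (-1 : ℂ) ^ m * (w - β) ^ m := by
      rw [show (1 - w - α : ℂ) = -(w - β) by rw [hβ]; ring, neg_pow]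
    rw [hpow, hg]
    dsimp only [PhiZ]
    ring
  have b2 : 2 * (m : ℝ) * β.re ≤ 1 :=
    (key_abs β hβ0 m hm).mp (hc β m hm g U' hU'open hβU' hgdiff hgβ hfac')
  rw [hβre] at b2
  have hmr : (1 : ℝ) ≤ (m : ℝ) := by exact_mod_cast hm
  have hm1 : m = 1 := by
    have : (m : ℝ) ≤ 1 := by linarith
    have : m ≤ 1 := by exact_mod_cast this
    omega
  refine ⟨hm1, ?_⟩
  rw [hm1] at b1 b2
  push_cast at b1 b2
  linarith

lemma zeta_analyticAt {α : ℂ} (hα : α ≠ 1) : AnalyticAt ℂ riemannZeta α := by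
  apply DifferentiableOn.analyticAt (s := {(1 : ℂ)}ᶜ)
  · exact fun z hz => (differentiableAt_riemannZeta hz).differentiableWithinAt
  · exact isOpen_compl_singleton.mem_nhds hα

lemma exists_factorization (α : ℂ) (h1 : 0 < α.re) (h2 : α.re < 1) (hz : riemannZeta α = 0) :
    ∃ m : ℕ, 1 ≤ m ∧ ∃ (h : ℂ → ℂ) (U : Set ℂ), IsOpen U ∧ α ∈ U ∧
      DifferentiableOn ℂ h U ∧ h α ≠ 0 ∧ ∀ z ∈ U, riemannZeta z = (z - α) ^ m * h z := by
  have hα1 : α ≠ 1 := by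
    intro h; rw [h] at h2; simp at h2
  have han : AnalyticAt ℂ riemannZeta α := zeta_analyticAt hα1
  have hfin : analyticOrderAt riemannZeta α ≠ ⊤ := by
    intro htop
    rw [analyticOrderAt_eq_top] at htop
    have hAnOn : AnalyticOnNhd ℂ riemannZeta {(1 : ℂ)}ᶜ := fun z hz => zeta_analyticAt hz
    have hconn : IsPreconnected ({(1 : ℂ)}ᶜ) :=
      (isConnected_compl_singleton_of_one_lt_rank
        (Complex.rank_real_complex ▸ Nat.one_lt_ofNat) 1).isPreconnected
    have heq := hAnOn.eqOn_zero_of_preconnected_of_eventuallyEq_zero hconn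
      (Set.mem_compl_singleton_iff.mpr hα1) htop
    have h2' := heq (Set.mem_compl_singleton_iff.mpr (by norm_num : (2 : ℂ) ≠ 1))
    rw [riemannZeta_two] at h2'
    simp only [Pi.zero_apply, div_eq_zero_iff] at h2'
    rcases h2' with h' | h'
    · exact (pow_ne_zero 2 (by exact_mod_cast Real.pi_ne_zero)) h'
    · norm_num at h'
  obtain ⟨n, hn'⟩ := WithTop.ne_top_iff_exists.mp hfin
  have hn : analyticOrderAt riemannZeta α = (n : ℕ∞) := hn'.symm
  rw [han.analyticOrderAt_eq_natCast] at hn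
  obtain ⟨g, hgan, hg0, hev⟩ := hn
  have hev' := hev
  rw [Filter.eventually_iff_exists_mem] at hev'
  obtain ⟨V, hV, hVfac⟩ := hev'
  obtain ⟨W, hWV, hWopen, hαW⟩ := mem_nhds_iff.mp hV
  obtain ⟨T, hT, hTfac⟩ := Filter.eventually_iff_exists_mem.mp hgan.eventually_analyticAt
  obtain ⟨T', hT'T, hT'open, hαT'⟩ := mem_nhds_iff.mp hT
  have hn1 : 1 ≤ n := by
    by_contra hn0
    have hn0 : n = 0 := by omega
    have := hVfac α (hWV hαW)
    rw [hn0] at this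
    simp at this
    rw [hz] at this
    exact hg0 this.symm
  refine ⟨n, hn1, g, W ∩ T', hWopen.inter hT'open, ⟨hαW, hαT'⟩, ?_, hg0, ?_⟩
  · intro x hx
    exact (hTfac x (hT'T hx.2)).differentiableAt.differentiableWithinAt
  · intro z hzz
    have := hVfac z (hWV hzz.1)
    rw [this]
    simp [smul_eq_mul]


/-- (a) The Riemann hypothesis together with the simplicity hypothesis (every zero of `ζ`
in the critical strip has real part `1/2` and order `1`) holds if and only if
(c) `ν_ζ` has no attracting fixed point, i.e. every zero `α ∈ ℂ` of `ζ`, of order `m`,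
satisfies `|1 - 1/(mα)| ≥ 1`. -/
theorem RH_simplicity_iff_no_attracting :
    (∀ (α : ℂ), 0 < α.re → α.re < 1 → riemannZeta α = 0 →
      α.re = 1 / 2 ∧
      ∀ (m : ℕ), 1 ≤ m → ∀ (h : ℂ → ℂ) (U : Set ℂ), IsOpen U → α ∈ U →
        DifferentiableOn ℂ h U → h α ≠ 0 →
        (∀ z ∈ U, riemannZeta z = (z - α) ^ m * h z) → m = 1) ↔
    (∀ (α : ℂ) (m : ℕ), 1 ≤ m →
      ∀ (h : ℂ → ℂ) (U : Set ℂ), IsOpen U → α ∈ U → DifferentiableOn ℂ h U → h α ≠ 0 →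
      (∀ z ∈ U, riemannZeta z = (z - α) ^ m * h z) →
      1 ≤ ‖(1 - 1 / (m * α) : ℂ)‖) := by
  constructor
  · intro ha α m hm h U hU hαU hdiff hh hfac
    have hζα : riemannZeta α = 0 := by
      have := hfac α hαU
      simpa [sub_self, zero_pow (by omega : m ≠ 0)] using this
    have hα0 : α ≠ 0 := by
      intro h0
      rw [h0, riemannZeta_zero] at hζα
      norm_num at hζα
    by_cases hge : 1 ≤ α.re
    · exact absurd hζα (riemannZeta_ne_zero_of_one_le_re hge)
    by_cases hpos : 0 < α.re
    · obtain ⟨hre, hsimp⟩ := ha α hpos (lt_of_not_ge hge) hζα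
      have hm1 : m = 1 := hsimp m hm h U hU hαU hdiff hh hfac
      subst hm1
      rw [key_abs α hα0 1 le_rfl, hre]
      push_cast
      norm_num
    · rw [key_abs α hα0 m hm]
      have hre0 : α.re ≤ 0 := le_of_not_gt hpos
      have hmn : (0:ℝ) ≤ (m:ℝ) := Nat.cast_nonneg m
      nlinarith
  · intro hc α h1 h2 hz
    obtain ⟨m, hm, h, U, hU, hαU, hdiff, hh, hfac⟩ := exists_factorization α h1 h2 hz
    refine ⟨(factor_bound hc α h1 h2 m hm h U hU hαU hdiff hh hfac).2, ?_⟩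
    intro m' hm' h' U' hU' hαU' hd' hh' hf'
    exact (factor_bound hc α h1 h2 m' hm' h' U' hU' hαU' hd' hh' hf').1
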